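/- If a nonincreasing nonnegative finite (length-N) sequence ξ is majorized by a nonincreasing nonnegative sequence η of length N (∑_{j=1}^n ξ_j ≤ ∑_{j=1}^n η_j for n < N, with equality at n = N is not assumed; only ξ ≺ η), then there exists a nonincreasing nonnegative length-N sequence ρ with ξ_j ≤ ρ_j for all j, ρ ≺ η, and ∑_{j=1}^N ρ_j = ∑_{j=1}^N η_j. -/

import Mathlib

open Finset

private lemma fan_sum_Iic {N : ℕ} (f : Fin N → ℝ) (n : Fin N) :
    ∑ j ∈ Finset.Iic n, f j =
      ∑ j ∈ Finset.range ((n : ℕ) + 1), (if h : j < N then f ⟨j, h⟩ else 0) := by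
  have h1 : (Finset.Iic n).image (fun i : Fin N => (i : ℕ)) = Finset.range ((n:ℕ)+1) := by
    ext t
    simp only [Finset.mem_image, Finset.mem_range, Finset.mem_Iic, Fin.le_def]
    constructor
    · rintro ⟨j, hj, rfl⟩; exact Nat.lt_succ_of_le hj
    · intro ht
      have htN : t < N := lt_of_le_of_lt (Nat.lt_succ_iff.mp ht) n.isLt
      exact ⟨⟨t, htN⟩, Nat.lt_succ_iff.mp ht, rfl⟩
  rw [← h1, Finset.sum_image (by intro a _ b _ h; exact Fin.ext h)]
  apply Finset.sum_congr rfl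
  intro j _
  rw [dif_pos j.isLt]

private lemma fan_sum_univ {N : ℕ} (f : Fin N → ℝ) :
    ∑ j, f j = ∑ j ∈ Finset.range N, (if h : j < N then f ⟨j, h⟩ else 0) := by
  rw [← Fin.sum_univ_eq_sum_range]
  apply Finset.sum_congr rfl
  intro j _
  rw [dif_pos j.isLt]

private noncomputable def fanExt {N : ℕ} (f : Fin N → ℝ) : ℕ → ℝ :=
  fun j => if h : j < N then f ⟨j, h⟩ else 0

private noncomputable def fanG {N : ℕ} (ξ η : Fin N → ℝ) : ℕ → ℝ :=
  fun t => (∑ j ∈ Finset.range t, fanExt η j) - ∑ j ∈ Finset.range t, fanExt ξ j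

private noncomputable def fanE {N : ℕ} (ξ η : Fin N → ℝ) : ℕ → ℝ :=
  fun k => if h : k ≤ N then (Finset.Icc k N).inf' ⟨k, Finset.mem_Icc.2 ⟨le_rfl, h⟩⟩ (fanG ξ η) else 0

private lemma fanE_le {N : ℕ} (ξ η : Fin N → ℝ) {k : ℕ} (hk : k ≤ N) :
    fanE ξ η k ≤ fanG ξ η k := by
  simp only [fanE, dif_pos hk]
  exact Finset.inf'_le _ (Finset.mem_Icc.2 ⟨le_rfl, hk⟩)

private lemma fanE_mono {N : ℕ} (ξ η : Fin N → ℝ) {k : ℕ} (hk : k + 1 ≤ N) :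
    fanE ξ η k ≤ fanE ξ η (k + 1) := by
  simp only [fanE, dif_pos hk, dif_pos (le_of_add_le_left hk : k ≤ N)]
  apply Finset.le_inf'
  intro t ht
  have h := Finset.mem_Icc.1 ht
  exact Finset.inf'_le _ (Finset.mem_Icc.2 ⟨by omega, h.2⟩)

private lemma fanE_N {N : ℕ} (ξ η : Fin N → ℝ) :
    fanE ξ η N = fanG ξ η N := by
  simp [fanE, Finset.Icc_self]

private lemma fanE_split {N : ℕ} (ξ η : Fin N → ℝ) {k : ℕ} (hk : k + 2 ≤ N) :
    fanE ξ η (k + 1) = min (fanG ξ η (k + 1)) (fanE ξ η (k + 2)) := by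
  have hIcc : Finset.Icc (k+1) N = insert (k+1) (Finset.Icc (k+2) N) := by
    ext t; simp only [Finset.mem_Icc, Finset.mem_insert]; omega
  have hne : (Finset.Icc (k+2) N).Nonempty := ⟨k+2, Finset.mem_Icc.2 ⟨le_rfl, hk⟩⟩
  simp only [fanE, dif_pos (by omega : k + 1 ≤ N), dif_pos hk]
  apply le_antisymm
  · apply le_min
    · exact Finset.inf'_le _ (Finset.mem_Icc.2 ⟨le_rfl, by omega⟩)
    · apply Finset.le_inf'
      intro t ht
      have h := Finset.mem_Icc.1 ht
      exact Finset.inf'_le _ (Finset.mem_Icc.2 ⟨by omega, h.2⟩)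
  · apply Finset.le_inf'
    intro t ht
    have h := Finset.mem_Icc.1 ht
    rcases eq_or_lt_of_le h.1 with heq | hlt
    · rw [← heq]; exact min_le_left _ _
    · exact le_trans (min_le_right _ _)
        (Finset.inf'_le _ (Finset.mem_Icc.2 ⟨by omega, h.2⟩))

theorem stmt19 (N : ℕ) (ξ η : Fin N → ℝ)
    (hξa : Antitone ξ) (hξ0 : ∀ j, 0 ≤ ξ j)
    (hηa : Antitone η) (hη0 : ∀ j, 0 ≤ η j)
    (hmaj : ∀ n : Fin N, ∑ j ∈ Finset.Iic n, ξ j ≤ ∑ j ∈ Finset.Iic n, η j) :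
    ∃ ρ : Fin N → ℝ, Antitone ρ ∧ (∀ j, 0 ≤ ρ j) ∧
      (∀ j, ξ j ≤ ρ j) ∧
      (∀ n : Fin N, ∑ j ∈ Finset.Iic n, ρ j ≤ ∑ j ∈ Finset.Iic n, η j) ∧
      (∑ j, ρ j) = (∑ j, η j) := by
  classical
  set g : ℕ → ℝ := fanG ξ η with hgdef
  set E : ℕ → ℝ := fanE ξ η with hEdef
  -- g is nonnegative on [0, N]
  have hgnn : ∀ t, t ≤ N → 0 ≤ g t := by
    intro t ht
    match t with
    | 0 => simp [hgdef, fanG]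
    | (m+1) =>
      have h := hmaj ⟨m, by omega⟩
      rw [fan_sum_Iic ξ, fan_sum_Iic η] at h
      simp only [hgdef, fanG, fanExt, sub_nonneg]
      exact h
  have hEnn : ∀ k, k ≤ N → 0 ≤ E k := by
    intro k hk
    simp only [hEdef, fanE, dif_pos hk]
    apply Finset.le_inf'
    intro t ht
    exact hgnn t (Finset.mem_Icc.1 ht).2
  have hE0 : E 0 = 0 := by
    refine le_antisymm ?_ (hEnn 0 (Nat.zero_le N))
    have := fanE_le ξ η (Nat.zero_le N)
    simpa [hgdef, fanG] using this
  -- the candidate sequence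
  set ρ : Fin N → ℝ := fun j => ξ j + (E ((j:ℕ)+1) - E (j:ℕ)) with hρdef
  have hξρ : ∀ j, ξ j ≤ ρ j := by
    intro j
    have := fanE_mono ξ η (j.isLt : (j:ℕ) + 1 ≤ N)
    simp only [hρdef]
    rw [← hEdef] at this
    linarith
  -- values of fanExt at valid indices
  have hextξ : ∀ (k : ℕ) (hk : k < N), fanExt ξ k = ξ ⟨k, hk⟩ := by
    intro k hk; simp [fanExt, dif_pos hk]
  have hextη : ∀ (k : ℕ) (hk : k < N), fanExt η k = η ⟨k, hk⟩ := by
    intro k hk; simp [fanExt, dif_pos hk]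
  -- adjacent antitonicity
  have hadj : ∀ (k : ℕ) (h2 : k + 2 ≤ N),
      ρ ⟨k+1, by omega⟩ ≤ ρ ⟨k, by omega⟩ := by
    intro k h2
    have hξle : ξ ⟨k+1, by omega⟩ ≤ ξ ⟨k, by omega⟩ := hξa (by simp [Fin.le_def])
    have hs : E (k+1) = min (g (k+1)) (E (k+2)) := fanE_split ξ η h2
    simp only [hρdef]
    rcases le_total (E (k+2)) (g (k+1)) with hcase | hcase
    · have heq : E (k+1) = E (k+2) := by rw [hs]; exact min_eq_right hcase
      have hm : E k ≤ E (k+1) := fanE_mono ξ η (by omega)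
      linarith
    · have hEe : E (k+1) = g (k+1) := by rw [hs]; exact min_eq_left hcase
      have h1 : E (k+2) ≤ g (k+2) := fanE_le ξ η h2
      have h2' : E k ≤ g k := fanE_le ξ η (by omega)
      have hg1 : g (k+2) - g (k+1) = fanExt η (k+1) - fanExt ξ (k+1) := by
        simp only [hgdef, fanG, Finset.sum_range_succ]; ring
      have hg2 : g (k+1) - g k = fanExt η k - fanExt ξ k := by
        simp only [hgdef, fanG, Finset.sum_range_succ]; ring
      rw [hextξ (k+1) (by omega), hextη (k+1) (by omega)] at hg1
      rw [hextξ k (by omega), hextη k (by omega)] at hg2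
      have hηle : η ⟨k+1, by omega⟩ ≤ η ⟨k, by omega⟩ := hηa (by simp [Fin.le_def])
      simp only [Fin.val_mk] at *
      linarith
  -- full antitonicity
  have hanti : Antitone ρ := by
    have step : ∀ (b a : ℕ) (hb : b < N) (ha : a ≤ b),
        ρ ⟨b, hb⟩ ≤ ρ ⟨a, by omega⟩ := by
      intro b
      induction b with
      | zero =>
        intro a hb ha
        have : a = 0 := by omega
        subst this; exact le_rfl
      | succ m ih =>
        intro a hb ha
        rcases Nat.lt_or_ge a (m+1) with h | h
        · calc ρ ⟨m+1, hb⟩ ≤ ρ ⟨m, by omega⟩ := hadj m (by omega)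
            _ ≤ ρ ⟨a, by omega⟩ := ih a (by omega) (by omega)
        · have : a = m + 1 := by omega
          subst this; exact le_rfl
    intro i j hij
    have := step (j:ℕ) (i:ℕ) j.isLt hij
    simpa using this
  -- partial sums of ρ
  have hρsum : ∀ (m : ℕ), m ≤ N →
      ∑ j ∈ Finset.range m, (if h : j < N then ρ ⟨j, h⟩ else 0)
        = (∑ j ∈ Finset.range m, fanExt ξ j) + (E m - E 0) := by
    intro m hm
    have : ∀ j ∈ Finset.range m, (if h : j < N then ρ ⟨j, h⟩ else 0)
        = fanExt ξ j + (E (j+1) - E j) := by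
      intro j hj
      have hjN : j < N := lt_of_lt_of_le (Finset.mem_range.1 hj) hm
      rw [dif_pos hjN, hextξ j hjN]
    rw [Finset.sum_congr rfl this, Finset.sum_add_distrib, Finset.sum_range_sub (fun i => E i)]
  have hpart : ∀ n : Fin N, ∑ j ∈ Finset.Iic n, ρ j ≤ ∑ j ∈ Finset.Iic n, η j := by
    intro n
    rw [fan_sum_Iic ρ, fan_sum_Iic η]
    rw [hρsum ((n:ℕ)+1) n.isLt]
    have hle : E ((n:ℕ)+1) ≤ g ((n:ℕ)+1) := fanE_le ξ η n.isLt
    have hgval : g ((n:ℕ)+1) = (∑ j ∈ Finset.range ((n:ℕ)+1), fanExt η j)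
        - ∑ j ∈ Finset.range ((n:ℕ)+1), fanExt ξ j := rfl
    have : ∑ j ∈ Finset.range ((n:ℕ)+1), (if h : j < N then η ⟨j, h⟩ else 0)
        = ∑ j ∈ Finset.range ((n:ℕ)+1), fanExt η j := rfl
    rw [this]
    rw [hE0]
    linarith
  -- total sum
  have htot : (∑ j, ρ j) = ∑ j, η j := by
    rw [fan_sum_univ ρ, fan_sum_univ η]
    rw [hρsum N le_rfl, hE0]
    have hEN : E N = g N := fanE_N ξ η
    have hgval : g N = (∑ j ∈ Finset.range N, fanExt η j)
        - ∑ j ∈ Finset.range N, fanExt ξ j := rfl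
    have : ∑ j ∈ Finset.range N, (if h : j < N then η ⟨j, h⟩ else 0)
        = ∑ j ∈ Finset.range N, fanExt η j := rfl
    rw [this, hEN, hgval]
    ring
  exact ⟨ρ, hanti, fun j => le_trans (hξ0 j) (hξρ j), hξρ, hpart, htot⟩
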